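/- arXiv:1302.4401 — 2 statements merged into one kernel-verified Lean document; each statement's English description precedes it below -/
import Mathlib

section
/- For every i ∈ ℕ and positive integers n, k with k ≥ 2, the shadow of S_k^i(n) is itself an initial segment of the squashed order on (k−1)-element sets avoiding i; that is, there exists e such that ∂S_k^i(n) = S_{k-1}^i(e). -/
open Finset

/-- The squashed (colexicographic) order on finite subsets of `ℕ`:
`A < B` iff `max (A ∖ B) < max (B ∖ A)`. -/
def SquashedLT (A B : Finset ℕ) : Prop :=
  (A \ B).max < (B \ A).max

/-- `S` is the family of the first `n` `k`-element subsets of `ℕ` in the squashed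
order: it has `n` members, all of size `k`, and is downward closed in the squashed
order among `k`-element sets. -/
def IsSquashedInitSeg (k n : ℕ) (S : Finset (Finset ℕ)) : Prop :=
  S.card = n ∧ (∀ A ∈ S, A.card = k) ∧
  ∀ A ∈ S, ∀ B : Finset ℕ, B.card = k → SquashedLT B A → B ∈ S

/-- `S` is the family of the first `n` `k`-element subsets of `ℕ` not containing `i`,
in the squashed order. -/
def IsSquashedInitSegAvoiding (i k n : ℕ) (S : Finset (Finset ℕ)) : Prop :=
  S.card = n ∧ (∀ A ∈ S, A.card = k ∧ i ∉ A) ∧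
  ∀ A ∈ S, ∀ B : Finset ℕ, B.card = k → i ∉ B → SquashedLT B A → B ∈ S

/-- The shadow of `S_k^i(n)` is itself an initial segment of the squashed order on
`(k-1)`-element sets avoiding `i`: there exists `e` with `∂(S_k^i(n)) = S_{k-1}^i(e)`. -/
theorem shadow_initSegAvoiding (i n k : ℕ) (hn : 0 < n) (hk : 2 ≤ k)
    (S : Finset (Finset ℕ)) (hS : IsSquashedInitSegAvoiding i k n S) :
    ∃ e, IsSquashedInitSegAvoiding i (k - 1) e (Finset.shadow S) := by
  obtain ⟨hcard, hmem, hdc⟩ := hS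
  refine ⟨(Finset.shadow S).card, rfl, ?_, ?_⟩
  · intro C hC
    rw [mem_shadow_iff] at hC
    obtain ⟨A, hA, a, ha, rfl⟩ := hC
    obtain ⟨hAk, hiA⟩ := hmem A hA
    exact ⟨by rw [card_erase_of_mem ha, hAk], fun h => hiA (mem_of_mem_erase h)⟩
  · intro B hB C hCk hiC hlt
    rw [mem_shadow_iff_insert_mem] at hB ⊢
    obtain ⟨a, haB, hA⟩ := hB
    set A := insert a B with hAdef
    obtain ⟨hAk, hiA⟩ := hmem A hA
    have hBA : B ⊆ A := subset_insert _ _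
    -- B \ C is nonempty
    have hBC : (B \ C).Nonempty := by
      by_contra h
      rw [not_nonempty_iff_eq_empty] at h
      rw [SquashedLT, h, Finset.max_empty] at hlt
      exact (not_lt_bot hlt)
    have hAC : (A \ C).Nonempty := hBC.mono (sdiff_subset_sdiff hBA Subset.rfl)
    set M := (A \ C).max' hAC with hMdef
    have hM : M ∈ A \ C := max'_mem _ _
    have hMA : M ∈ A := (mem_sdiff.1 hM).1
    have hMC : M ∉ C := (mem_sdiff.1 hM).2
    have hMi : M ≠ i := fun h => hiA (h ▸ hMA)
    -- every element of C \ A is < M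
    have key : ∀ y ∈ C \ A, y < M := by
      intro y hy
      have hy' : y ∈ C \ B := sdiff_subset_sdiff Subset.rfl hBA hy
      have h1 : (y : WithBot ℕ) ≤ (C \ B).max := le_max hy'
      have h2 : (B \ C).max ≤ (A \ C).max :=
        Finset.max_mono (sdiff_subset_sdiff hBA Subset.rfl)
      have h3 : (y : WithBot ℕ) < (A \ C).max :=
        lt_of_le_of_lt h1 (lt_of_lt_of_le hlt h2)
      rw [← coe_max' hAC] at h3
      exact WithBot.coe_lt_coe.1 h3
    -- choose x : least natural not in insert i C
    have hex : ∃ m, m ∉ insert i C := Infinite.exists_notMem_finset _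
    set x := Nat.find hex with hxdef
    have hxspec : x ∉ insert i C := Nat.find_spec hex
    have hxmin : ∀ j < x, j ∈ insert i C := fun j hj => not_not.1 (Nat.find_min hex hj)
    have hxC : x ∉ C := fun h => hxspec (mem_insert_of_mem h)
    have hxi : x ≠ i := fun h => hxspec (h ▸ mem_insert_self _ _)
    have hxM : x ≤ M := by
      by_contra h
      push_neg at h
      have := hxmin M h
      rcases mem_insert.1 this with h' | h'
      · exact hMi h'
      · exact hMC h'
    have hcardD : (insert x C).card = k := by
      rw [card_insert_of_notMem hxC, hCk]
      omega
    have hiD : i ∉ insert x C := by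
      intro h
      rcases mem_insert.1 h with h' | h'
      · exact hxi h'.symm
      · exact hiC h'
    refine ⟨x, hxC, ?_⟩
    rcases eq_or_lt_of_le hxM with hxeq | hxlt
    · -- x = M : insert x C = A
      have hsub : A ⊆ insert x C := by
        intro b hb
        by_cases hbC : b ∈ C
        · exact mem_insert_of_mem hbC
        · have hbAC : b ∈ A \ C := mem_sdiff.2 ⟨hb, hbC⟩
          have hbM : b ≤ M := le_max' _ _ hbAC
          rcases eq_or_lt_of_le hbM with h' | h'
          · rw [h', ← hxeq]; exact mem_insert_self _ _
          · have := hxmin b (hxeq ▸ h')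
            rcases mem_insert.1 this with h'' | h''
            · exact absurd (h'' ▸ hb) hiA
            · exact absurd h'' hbC
      have heq : insert x C = A :=
        (eq_of_subset_of_card_le hsub (by rw [hcardD, hAk])).symm
      rw [heq]; exact hA
    · -- x < M : insert x C <sq A, so insert x C ∈ S
      refine hdc A hA _ hcardD hiD ?_
      have hMAD : M ∈ A \ insert x C := by
        refine mem_sdiff.2 ⟨hMA, fun h => ?_⟩
        rcases mem_insert.1 h with h' | h'
        · exact absurd h' (ne_of_gt hxlt)
        · exact hMC h'
      have hle : (M : WithBot ℕ) ≤ (A \ insert x C).max := le_max hMAD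
      have hltM : (insert x C \ A).max < (M : WithBot ℕ) := by
        rcases (insert x C \ A).eq_empty_or_nonempty with h | h
        · rw [h, Finset.max_empty]; exact WithBot.bot_lt_coe _
        · rw [← coe_max' h]
          have hmem' := max'_mem _ h
          rcases mem_sdiff.1 hmem' with ⟨hm1, hm2⟩
          rcases mem_insert.1 hm1 with h' | h'
          · exact WithBot.coe_lt_coe.2 (by rw [h']; exact hxlt)
          · exact WithBot.coe_lt_coe.2 (key _ (mem_sdiff.2 ⟨h', hm2⟩))
      exact lt_of_lt_of_le hltM hle
end

section
/- Let U be a finite family of n distinct k-element sets (k ≥ 1) with underlying set V = ⋃_{A∈U} A of cardinality v, and for i ∈ V set B_i = {A ∈ U : i ∉ A} and C_i = {A∖{i} : i ∈ A ∈ U}. If for every i ∈ V one has |∂B_i| ≤ |C_i|, and moreover for every i ∈ V and every F ∈ ∂B_i all v−k sets of the form F ∪ {j} with j ∈ V∖F belong to U, then U consists of all k-element subsets of V. (Equality-case analysis in the proof of Lemma 2.1.) -/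
open Finset

/-- Equality-case analysis in the proof of Lemma 2.1: let `U` be a family of `n`
distinct `k`-element sets with underlying set `V = ⋃_{A ∈ U} A` of cardinality `v`,
`B i = {A ∈ U : i ∉ A}` and `C i = {A \ {i} : i ∈ A ∈ U}`.  If `|∂(B i)| ≤ |C i|`
for every `i ∈ V`, and for every `i ∈ V` and every `F ∈ ∂(B i)` all `v - k` sets
`F ∪ {j}` with `j ∈ V \ F`, `j ≠ i`, belong to `U`, then `U` consists of all
`k`-element subsets of `V`. -/
theorem equality_case (n k : ℕ) (hk : 1 ≤ k)
    (U : Finset (Finset ℕ)) (hUn : U.card = n) (hUk : ∀ A ∈ U, A.card = k)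
    (h₁ : ∀ i ∈ U.sup id,
      (Finset.shadow (U.filter fun A => i ∉ A)).card ≤
        ((U.filter fun A => i ∈ A).image fun A => A.erase i).card)
    (h₂ : ∀ i ∈ U.sup id, ∀ F ∈ Finset.shadow (U.filter fun A => i ∉ A),
      ∀ j ∈ U.sup id, j ∉ F → j ≠ i → insert j F ∈ U) :
    U = Finset.powersetCard k (U.sup id) := by
  obtain rfl | hne := U.eq_empty_or_nonempty
  · simp only [Finset.sup_empty]
    rw [eq_comm, Finset.powersetCard_eq_empty]
    simpa using Nat.lt_of_succ_le hk
  set V := U.sup id with hV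
  have hsubV : ∀ A ∈ U, A ⊆ V := fun A hA => le_sup (f := id) hA
  ext S
  rw [Finset.mem_powersetCard]
  constructor
  · intro hS; exact ⟨hsubV S hS, hUk S hS⟩
  rintro ⟨hSV, hSk⟩
  obtain ⟨A₀, hA₀⟩ := hne
  suffices H : ∀ m, ∀ A ∈ U, (S \ A).card = m → S ∈ U from H _ A₀ hA₀ rfl
  intro m
  induction m using Nat.strong_induction_on with
  | _ m ih =>
  intro A hA hcard
  by_cases hSA : S = A
  · subst hSA; exact hA
  have hcardA : A.card = k := hUk A hA
  have hSAne : (S \ A).Nonempty := by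
    rw [Finset.sdiff_nonempty]
    intro h
    exact hSA (Finset.eq_of_subset_of_card_le h (by rw [hcardA, hSk]))
  obtain ⟨j, hj⟩ := hSAne
  have hjS : j ∈ S := (Finset.mem_sdiff.1 hj).1
  have hjA : j ∉ A := (Finset.mem_sdiff.1 hj).2
  have hjV : j ∈ V := hSV hjS
  have hASne : (A \ S).Nonempty := by
    rw [← Finset.card_pos, Finset.card_sdiff_comm (by rw [hcardA, hSk])]
    rw [Finset.card_pos]
    exact ⟨j, hj⟩
  obtain ⟨i, hi⟩ := hASne
  have hiA : i ∈ A := (Finset.mem_sdiff.1 hi).1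
  have hiS : i ∉ S := (Finset.mem_sdiff.1 hi).2
  by_cases hex : ∃ i' ∈ V, i' ∉ A ∧ i' ≠ j
  · obtain ⟨i', hi'V, hi'A, hi'j⟩ := hex
    have hF : A.erase i ∈ Finset.shadow (U.filter fun B => i' ∉ B) := by
      rw [Finset.mem_shadow_iff]
      exact ⟨A, by simp [hA, hi'A], i, hiA, rfl⟩
    have hA' : insert j (A.erase i) ∈ U :=
      h₂ i' hi'V _ hF j hjV (fun h => hjA (Finset.mem_of_mem_erase h)) (Ne.symm hi'j)
    refine ih (S \ insert j (A.erase i)).card ?_ _ hA' rfl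
    have hsub : S \ insert j (A.erase i) ⊆ (S \ A).erase j := by
      intro x hx
      obtain ⟨hxS, hxA'⟩ := Finset.mem_sdiff.1 hx
      simp only [Finset.mem_insert, Finset.mem_erase, not_or, not_and] at hxA'
      refine Finset.mem_erase.2 ⟨hxA'.1, Finset.mem_sdiff.2 ⟨hxS, fun hxA => ?_⟩⟩
      rcases eq_or_ne x i with rfl | hxi
      · exact hiS hxS
      · exact hxA'.2 hxi hxA
    calc (S \ insert j (A.erase i)).card ≤ ((S \ A).erase j).card :=
          Finset.card_le_card hsub
      _ < (S \ A).card := Finset.card_erase_lt_of_mem hj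
      _ = m := hcard
  · push_neg at hex
    have hVA : V = insert j A := by
      apply Finset.Subset.antisymm
      · intro x hx
        by_cases hxA : x ∈ A
        · exact Finset.mem_insert_of_mem hxA
        · rw [hex x hx hxA]; exact Finset.mem_insert_self _ _
      · exact Finset.insert_subset hjV (hsubV A hA)
    have hBj : U.filter (fun B => j ∉ B) = {A} := by
      ext M
      simp only [Finset.mem_filter, Finset.mem_singleton]
      constructor
      · rintro ⟨hM, hjM⟩
        have hMA : M ⊆ A := by
          intro x hxM
          have hxV := hsubV M hM hxM
          rw [hVA] at hxV
          rcases Finset.mem_insert.1 hxV with rfl | h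
          · exact absurd hxM hjM
          · exact h
        exact Finset.eq_of_subset_of_card_le hMA (by rw [hcardA, hUk M hM])
      · rintro rfl; exact ⟨hA, hjA⟩
    have hshadow : Finset.shadow ({A} : Finset (Finset ℕ)) = A.image A.erase := by
      ext F
      rw [Finset.mem_shadow_iff, Finset.mem_image]
      constructor
      · rintro ⟨B, hB, a, ha, rfl⟩
        rw [Finset.mem_singleton] at hB
        subst hB
        exact ⟨a, ha, rfl⟩
      · rintro ⟨a, ha, rfl⟩
        exact ⟨A, Finset.mem_singleton_self A, a, ha, rfl⟩
    have hshadowcard : (Finset.shadow ({A} : Finset (Finset ℕ))).card = k := by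
      rw [hshadow, Finset.card_image_of_injOn, hcardA]
      intro a ha b hb hab
      by_contra hne
      have h1 : a ∈ A.erase b := Finset.mem_erase.2 ⟨hne, ha⟩
      rw [← hab] at h1
      exact (Finset.mem_erase.1 h1).1 rfl
    set C := (U.filter fun B => j ∈ B).image fun B => B.erase j with hC
    have hCsub : C ⊆ Finset.powersetCard (k-1) A := by
      intro F hF
      obtain ⟨M, hM, rfl⟩ := Finset.mem_image.1 hF
      obtain ⟨hMU, hjM⟩ := Finset.mem_filter.1 hM
      rw [Finset.mem_powersetCard]
      constructor
      · intro x hx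
        obtain ⟨hxj, hxM⟩ := Finset.mem_erase.1 hx
        have hxV := hsubV M hMU hxM
        rw [hVA] at hxV
        rcases Finset.mem_insert.1 hxV with rfl | h
        · exact absurd rfl hxj
        · exact h
      · rw [Finset.card_erase_of_mem hjM, hUk M hMU]
    have hPcard : (Finset.powersetCard (k-1) A).card = k := by
      rw [Finset.card_powersetCard, hcardA, ← Nat.choose_symm (Nat.sub_le k 1),
        Nat.sub_sub_self hk, Nat.choose_one_right]
    have hk_le : k ≤ C.card := by
      have := h₁ j hjV
      rwa [hBj, hshadowcard, ← hC] at this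
    have hCk : C = Finset.powersetCard (k-1) A :=
      Finset.eq_of_subset_of_card_le hCsub (by rw [hPcard]; exact hk_le)
    have hSe : S.erase j ∈ Finset.powersetCard (k-1) A := by
      rw [Finset.mem_powersetCard]
      constructor
      · intro x hx
        obtain ⟨hxj, hxS⟩ := Finset.mem_erase.1 hx
        have hxV := hSV hxS
        rw [hVA] at hxV
        rcases Finset.mem_insert.1 hxV with rfl | h
        · exact absurd rfl hxj
        · exact h
      · rw [Finset.card_erase_of_mem hjS, hSk]
    rw [← hCk] at hSe
    obtain ⟨M, hM, hMe⟩ := Finset.mem_image.1 hSe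
    obtain ⟨hMU, hjM⟩ := Finset.mem_filter.1 hM
    have hMS : M = S := by
      rw [← Finset.insert_erase hjM, hMe, Finset.insert_erase hjS]
    rwa [hMS] at hMU
end
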